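/- For all z, w in the open unit ball 𝔹_n of ℂ^n, the Bergman distance satisfies β(z,w) ≥ (1/2)|z − w|, where |·| is the Euclidean norm. -/

import Mathlib

open Metric Filter

open ComplexConjugate

open Classical in
/-- The Möbius involution `φ_a` of the unit ball `𝔹_n`:
`φ_a(z) = (a − P_a(z) − s_a Q_a(z)) / (1 − ⟨z,a⟩)` for `a ≠ 0`, and `φ_0 = −id`. -/
noncomputable def mobius {n : ℕ} (a z : EuclideanSpace ℂ (Fin n)) :
    EuclideanSpace ℂ (Fin n) :=
  if a = 0 then -z
  else
    ((1 - (inner ℂ a z : ℂ))⁻¹) •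
      (a - ((inner ℂ a z : ℂ) / (inner ℂ a a : ℂ)) • a
         - (Real.sqrt (1 - ‖a‖ ^ 2) : ℂ) • (z - ((inner ℂ a z : ℂ) / (inner ℂ a a : ℂ)) • a))

/-- The Bergman distance on the unit ball:
`β(z,w) = (1/2) log((1 + |φ_z(w)|)/(1 − |φ_z(w)|))`. -/
noncomputable def bergman {n : ℕ} (z w : EuclideanSpace ℂ (Fin n)) : ℝ :=
  Real.log ((1 + ‖mobius z w‖) / (1 - ‖mobius z w‖)) / 2



theorem aux_key_poly (A Z r c : ℝ) (hA0 : 0 ≤ A) (hA1 : A ≤ 1) (hZ0 : 0 ≤ Z) (hZ1 : Z ≤ 1)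
    (hc0 : 0 ≤ c) (hc : c^2 ≤ A*Z) (hr : r^2 ≤ c^2) :
    (A + Z - 2*r) * (1 - 2*r + c^2) ≤ 4*(A - 2*r + (1-A)*Z + c^2) := by
  have hAM : A*Z ≤ ((A+Z)/2)^2 := by nlinarith [sq_nonneg (A - Z)]
  have h2c : 2*c ≤ A + Z := by nlinarith [sq_nonneg (A + Z - 2*c)]
  have hfc : 4*(A*Z - c^2) ≤ (A + Z - 2*c) * (3 + 2*c - c^2) := by
    nlinarith [mul_nonneg (by linarith : (0:ℝ) ≤ A + Z - 2*c)
      (by nlinarith : (0:ℝ) ≤ 3 - 2*c - c^2 - (A + Z - 2*c))]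
  have hfmc : 4*(A*Z - c^2) ≤ (A + Z + 2*c) * (3 - 2*c - c^2) := by
    nlinarith [mul_nonneg (by linarith : (0:ℝ) ≤ A + Z + 2*c)
      (by nlinarith : (0:ℝ) ≤ 3 + 2*c - c^2 - (A + Z + 2*c))]
  rcases eq_or_lt_of_le hc0 with h | h
  · have : r = 0 := by nlinarith
    subst this; nlinarith
  · have hr1 : -c ≤ r := by nlinarith
    have hr2 : r ≤ c := by nlinarith
    -- 2c * f(r) = (c+r) f(c) + (c-r) f(-c) + 8c(c^2 - r^2), with f(±c) ≥ 0
    have e1 : 0 ≤ (c + r) * ((A + Z - 2*c) * (3 + 2*c - c^2) - 4*(A*Z - c^2)) :=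
      mul_nonneg (by linarith) (by linarith)
    have e2 : 0 ≤ (c - r) * ((A + Z + 2*c) * (3 - 2*c - c^2) - 4*(A*Z - c^2)) :=
      mul_nonneg (by linarith) (by linarith)
    have e3 : 0 ≤ 8*c*(c^2 - r^2) := by nlinarith
    have key : 0 ≤ 2*c * (4*(A - 2*r + (1-A)*Z + c^2) - (A + Z - 2*r) * (1 - 2*r + c^2)) := by
      nlinarith [e1, e2, e3]
    nlinarith [key, h]


theorem aux_log_ge (t : ℝ) (h0 : 0 ≤ t) (h1 : t < 1) :
    2 * t ≤ Real.log ((1 + t) / (1 - t)) := by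
  have hlt : ∀ x ∈ Set.Icc (0:ℝ) t, x < 1 := fun x hx => lt_of_le_of_lt hx.2 h1
  set f : ℝ → ℝ := fun x => Real.log (1 + x) - Real.log (1 - x) - 2 * x with hf
  have hd : ∀ x ∈ Set.Ioo (0:ℝ) t, HasDerivAt f (1/(1+x) - (-1/(1-x)) - 2) x := by
    intro x hx
    have h1x : (0:ℝ) < 1 + x := by have := hx.1; linarith
    have h2x : (0:ℝ) < 1 - x := by
      have := hlt x (Set.mem_Icc.mpr ⟨le_of_lt hx.1, le_of_lt hx.2⟩); linarith
    have d1 : HasDerivAt (fun x : ℝ => Real.log (1 + x)) (1/(1+x)) x := by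
      simpa using (((hasDerivAt_id x).const_add 1).log h1x.ne')
    have d2 : HasDerivAt (fun x : ℝ => Real.log (1 - x)) (-1/(1-x)) x := by
      simpa using (((hasDerivAt_id x).const_sub 1).log h2x.ne')
    exact ((d1.sub d2).sub ((hasDerivAt_id x).const_mul 2)).congr_deriv (by ring)
  have hmono : MonotoneOn f (Set.Icc 0 t) := by
    apply monotoneOn_of_deriv_nonneg (convex_Icc 0 t)
    · apply ContinuousOn.sub (ContinuousOn.sub ?_ ?_) (continuousOn_const.mul continuousOn_id)
      · exact (Real.continuousOn_log.comp (by fun_prop) (fun x hx => by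
          have := hx.1; simp; linarith))
      · exact (Real.continuousOn_log.comp (by fun_prop) (fun x hx => by
          have := hlt x hx; simp; intro hc; linarith))
    · intro x hx
      rw [interior_Icc] at hx
      exact (hd x hx).differentiableAt.differentiableWithinAt
    · intro x hx
      rw [interior_Icc] at hx
      have h1x : (0:ℝ) < 1 + x := by have := hx.1; linarith
      have h2x : (0:ℝ) < 1 - x := by
        have := hlt x (Set.mem_Icc.mpr ⟨le_of_lt hx.1, le_of_lt hx.2⟩); linarith
      rw [(hd x hx).deriv]
      have hb : (1+x)*(1-x) ≤ 1 := by nlinarith [sq_nonneg x]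
      have hpos : 0 < (1+x)*(1-x) := mul_pos h1x h2x
      rw [sub_nonneg]
      calc (2:ℝ) = 2/1 := by norm_num
        _ ≤ 2/((1+x)*(1-x)) := by apply div_le_div_of_nonneg_left (by norm_num) hpos hb
        _ = 1/(1+x) - -1/(1-x) := by field_simp; ring
  have := hmono (Set.left_mem_Icc.mpr h0) (Set.right_mem_Icc.mpr h0) h0
  have hf0 : f 0 = 0 := by simp [hf]
  have hft : f t = Real.log ((1+t)/(1-t)) - 2*t := by
    rw [hf]; simp only []
    rw [Real.log_div (by linarith) (by linarith)]
  rw [hf0, hft] at this; linarith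




theorem aux_norm_m {n : ℕ} (a z : EuclideanSpace ℂ (Fin n)) (ha : a ≠ 0) (hA : ‖a‖ ≤ 1) :
    ‖a - ((inner ℂ a z : ℂ) / (inner ℂ a a : ℂ)) • a
       - (Real.sqrt (1 - ‖a‖ ^ 2) : ℂ) • (z - ((inner ℂ a z : ℂ) / (inner ℂ a a : ℂ)) • a)‖ ^ 2
    = ‖a‖^2 - 2*(inner ℂ a z : ℂ).re + Complex.normSq (inner ℂ a z : ℂ) + (1 - ‖a‖^2)*‖z‖^2 := by
  set α : ℂ := (inner ℂ a z : ℂ) with hα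
  set s : ℝ := Real.sqrt (1 - ‖a‖ ^ 2) with hs
  have hAC : (inner ℂ a a : ℂ) = ((‖a‖:ℂ))^2 := inner_self_eq_norm_sq_to_K a
  have hZC : (inner ℂ z z : ℂ) = ((‖z‖:ℂ))^2 := inner_self_eq_norm_sq_to_K z
  have hza : (inner ℂ z a : ℂ) = conj α := by rw [hα, inner_conj_symm]
  have hA0 : ((‖a‖:ℂ))^2 ≠ 0 := by
    simp only [ne_eq, pow_eq_zero_iff, Complex.ofReal_eq_zero, norm_eq_zero]
    exact fun h => ha (by simpa using h)
  have hs2 : ((s:ℂ))^2 = 1 - ((‖a‖:ℂ))^2 := by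
    have h2 : s^2 = 1 - ‖a‖^2 := Real.sq_sqrt (by nlinarith [norm_nonneg a])
    rw [← Complex.ofReal_pow, h2]; push_cast; ring
  set c1 : ℂ := 1 - α/((‖a‖:ℂ))^2 + (s:ℂ)*(α/((‖a‖:ℂ))^2) with hc1
  have hm : a - (α / (inner ℂ a a : ℂ)) • a - ((s:ℝ):ℂ) • (z - (α / (inner ℂ a a : ℂ)) • a)
      = c1 • a - ((s:ℝ):ℂ) • z := by
    rw [hAC, hc1]; module
  rw [hm]
  have hinner : (inner ℂ (c1 • a - ((s:ℝ):ℂ) • z) (c1 • a - ((s:ℝ):ℂ) • z) : ℂ)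
      = conj c1 * c1 * ((‖a‖:ℂ))^2 - conj c1 * (s:ℂ) * α - (s:ℂ) * c1 * conj α
        + ((s:ℂ))^2 * ((‖z‖:ℂ))^2 := by
    simp only [inner_sub_left, inner_sub_right, inner_smul_left, inner_smul_right,
      hAC, hZC, hza, ← hα, Complex.conj_ofReal]
    ring
  have hE : (inner ℂ (c1 • a - ((s:ℝ):ℂ) • z) (c1 • a - ((s:ℝ):ℂ) • z) : ℂ)
      = ((‖a‖:ℂ))^2 - (α + conj α) + conj α * α + (1 - ((‖a‖:ℂ))^2) * ((‖z‖:ℂ))^2 := by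
    rw [hinner]
    have hc1c : conj c1 = 1 - conj α/((‖a‖:ℂ))^2 + (s:ℂ)*(conj α/((‖a‖:ℂ))^2) := by
      rw [hc1]; simp [map_div₀, Complex.conj_ofReal]
    rw [hc1c, hc1]
    have hArw : ((‖a‖:ℂ))^2 = 1 - ((s:ℂ))^2 := by rw [hs2]; ring
    rw [hArw] at hA0 ⊢
    field_simp
    ring
  have hre := inner_self_eq_norm_sq (𝕜 := ℂ) (c1 • a - ((s:ℝ):ℂ) • z)
  rw [← hre, hE]
  simp only [← Complex.ofReal_pow, RCLike.re_to_complex, Complex.add_re, Complex.sub_re,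
    Complex.mul_re, Complex.ofReal_re, Complex.ofReal_im, Complex.one_re, Complex.one_im,
    Complex.conj_re, Complex.conj_im, Complex.normSq_apply]
  ring

set_option maxHeartbeats 1600000 in
theorem bergman_ge_half_dist {n : ℕ} (z w : EuclideanSpace ℂ (Fin n))
    (hz : z ∈ ball (0 : EuclideanSpace ℂ (Fin n)) 1)
    (hw : w ∈ ball (0 : EuclideanSpace ℂ (Fin n)) 1) :
    (1 / 2 : ℝ) * ‖z - w‖ ≤ bergman z w := by
  rw [mem_ball_zero_iff] at hz hw
  have hbound : ‖z - w‖ / 2 ≤ ‖mobius z w‖ ∧ ‖mobius z w‖ < 1 := by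
    by_cases hz0 : z = 0
    · subst hz0
      rw [show mobius 0 w = -w from by rw [mobius, if_pos rfl]]
      constructor
      · simp only [zero_sub, norm_neg]; linarith [norm_nonneg w]
      · simp only [norm_neg]; exact hw
    · -- data
      set α : ℂ := (inner ℂ z w : ℂ) with hα
      set A : ℝ := ‖z‖^2 with hA
      set Z : ℝ := ‖w‖^2 with hZ
      set r : ℝ := α.re with hr
      set c : ℝ := ‖α‖ with hc
      have hc2 : c^2 ≤ A*Z := by
        have := norm_inner_le_norm (𝕜 := ℂ) z w
        nlinarith [norm_nonneg α, norm_nonneg z, norm_nonneg w]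
      have hr2 : r^2 ≤ c^2 := by
        have := Complex.abs_re_le_norm α
        calc r^2 = |α.re|^2 := by rw [sq_abs, hr]
          _ ≤ c^2 := by rw [hc]; exact pow_le_pow_left₀ (abs_nonneg _) this 2
      have hA1 : A ≤ 1 := by rw [hA]; nlinarith [norm_nonneg z]
      have hZ1 : Z ≤ 1 := by rw [hZ]; nlinarith [norm_nonneg w]
      have hA0 : 0 ≤ A := sq_nonneg _
      have hZ0 : 0 ≤ Z := sq_nonneg _
      have hAlt : A < 1 := by rw [hA]; nlinarith [norm_nonneg z]
      have hZlt : Z < 1 := by rw [hZ]; nlinarith [norm_nonneg w]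
      have hAZ1 : A * Z < 1 := by rw [hA, hZ]; nlinarith [norm_nonneg z, norm_nonneg w]
      have hc1 : c < 1 := by nlinarith [norm_nonneg α, hc.ge]
      have h1α : (1 : ℂ) - α ≠ 0 := by
        intro h
        have h1 : (1:ℂ) = α := sub_eq_zero.mp h
        rw [hc, ← h1] at hc1
        simp at hc1
      have hD2 : Complex.normSq (1 - α) = 1 - 2*r + c^2 := by
        rw [hc, Complex.sq_norm]
        simp [Complex.normSq_apply, Complex.sub_re, Complex.sub_im, hr]
        ring
      have hD2pos : 0 < 1 - 2*r + c^2 := by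
        have := Complex.normSq_pos.mpr h1α
        rwa [hD2] at this
      have hnm := aux_norm_m z w hz0 (le_of_lt hz)
      have hmob : mobius z w = ((1 - α)⁻¹) •
          (z - (α / (inner ℂ z z : ℂ)) • z
            - (Real.sqrt (1 - ‖z‖ ^ 2) : ℂ) • (w - (α / (inner ℂ z z : ℂ)) • z)) := by
        rw [mobius, if_neg hz0]
      set t : ℝ := ‖mobius z w‖ with htdef
      have ht0 : 0 ≤ t := norm_nonneg _
      have ht2 : t^2 * (1 - 2*r + c^2) = A - 2*r + c^2 + (1-A)*Z := by
        rw [htdef, hmob, norm_smul]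
        rw [mul_pow, hnm]
        have h1 : ‖(1 - α)⁻¹‖^2 = (Complex.normSq (1 - α))⁻¹ := by
          rw [norm_inv, inv_pow, Complex.sq_norm]
        rw [h1, hD2]
        have hcsq : Complex.normSq α = c^2 := by rw [hc, Complex.sq_norm]
        rw [hcsq, ← hα, ← hr, ← hA, ← hZ]
        field_simp
      clear_value t
      clear hmob hnm
      have hd2 : ‖z - w‖^2 = A - 2*r + Z := by
        rw [norm_sub_sq (𝕜 := ℂ)]
        simp only [RCLike.re_to_complex, ← hα, ← hA, ← hZ, ← hr]
      have hkey := aux_key_poly A Z r c hA0 hA1 hZ0 hZ1 (by rw [hc]; exact norm_nonneg α) hc2 hr2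
      have hN4 : t^2*4*(1 - 2*r + c^2) = 4*(A - 2*r + (1-A)*Z + c^2) := by
        linear_combination 4*ht2
      have h6 : (A - 2*r + Z) * (1 - 2*r + c^2) ≤ t^2*4*(1 - 2*r + c^2) := by
        calc (A - 2*r + Z) * (1 - 2*r + c^2) = (A + Z - 2*r) * (1 - 2*r + c^2) := by ring
          _ ≤ 4*(A - 2*r + (1-A)*Z + c^2) := hkey
          _ = t^2*4*(1 - 2*r + c^2) := hN4.symm
      have h7 : A - 2*r + Z ≤ t^2*4 := le_of_mul_le_mul_right h6 hD2pos
      clear_value α A Z r c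
      have ht2ge : (‖z - w‖/2)^2 ≤ t^2 := by
        rw [div_pow, hd2, div_le_iff₀ (by norm_num : (0:ℝ) < 2^2)]
        linarith
      have hNlt : t^2*(1 - 2*r + c^2) < 1*(1 - 2*r + c^2) := by
        rw [ht2, one_mul]
        nlinarith [mul_pos (by linarith : (0:ℝ) < 1-A) (by linarith : (0:ℝ) < 1-Z)]
      have ht1 : t^2 < 1 := lt_of_mul_lt_mul_right hNlt hD2pos.le
      constructor
      · have := Real.sqrt_le_sqrt ht2ge
        rwa [Real.sqrt_sq (by positivity), Real.sqrt_sq ht0] at this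
      · nlinarith [ht1, ht0]
  rw [bergman]
  set u : ℝ := ‖mobius z w‖ with hu
  have h0 : (0:ℝ) ≤ u := norm_nonneg _
  clear_value u
  obtain ⟨h1, h2⟩ := hbound
  linarith [aux_log_ge u h0 h2]
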